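/- If Γ proves both x and ¬x by resolution, where Γ is the clausal theory of a digraph G and x a vertex with out-neighborhood E(x), then Γ proves both y and ¬y for every out-neighbor y ∈ E(x). -/
import Mathlib


/-- A clause over atoms `V`: positive atoms and negated atoms. -/
abbrev Clause (V : Type) := Finset V × Finset V

/-- Resolution derivability from a set of clauses `Γ`:
membership, the axioms `a ∨ ¬a`, and the resolution (cut) rule. -/
inductive Res {V : Type} [DecidableEq V] (Γ : Set (Clause V)) : Clause V → Prop
  | mem {C : Clause V} : C ∈ Γ → Res Γ C
  | ax (a : V) : Res Γ ({a}, {a})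
  | cut {A₁ B₁ A₂ B₂ : Finset V} (a : V) :
      Res Γ (insert a A₁, B₁) → Res Γ (A₂, insert a B₂) → Res Γ (A₁ ∪ A₂, B₁ ∪ B₂)

/-- Satisfaction of a clause by a 3-partition `(t,f,p)` of the atoms. -/
def Sat {V : Type} (t f p : Set V) (C : Clause V) : Prop :=
  (∃ a ∈ C.1, a ∈ t) ∨ (∃ b ∈ C.2, b ∈ f) ∨
    ((∀ a ∈ C.1, a ∈ p) ∧ (∀ b ∈ C.2, b ∈ p) ∧ p.Nonempty)

private lemma elim_aux {V : Type} [DecidableEq V] (Γ : Set (Clause V)) (y : V) :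
    ∀ n (A : Finset V), A.card = n → Res Γ (A, ∅) → y ∈ A →
      (∀ z ∈ A, z ≠ y → Res Γ (∅, {z})) → Res Γ ({y}, ∅) := by
  intro n
  induction n with
  | zero => intro A hc _ hy _; simp [Finset.card_eq_zero] at hc; simp [hc] at hy
  | succ n ih =>
    intro A hc hA hy hz
    by_cases hall : ∀ z ∈ A, z = y
    · have : A = {y} := Finset.eq_singleton_iff_unique_mem.mpr ⟨hy, hall⟩
      rwa [this] at hA
    · push_neg at hall
      obtain ⟨z, hzA, hzy⟩ := hall
      have hA' : A = insert z (A.erase z) := (Finset.insert_erase hzA).symm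
      have step : Res Γ (A.erase z ∪ ∅, ∅ ∪ ∅) := by
        refine Res.cut z ?_ ?_
        · rwa [← hA']
        · have := hz z hzA hzy
          simpa using this
      have step' : Res Γ (A.erase z, ∅) := by simpa using step
      refine ih (A.erase z) ?_ step' (Finset.mem_erase.mpr ⟨fun h => hzy h.symm, hy⟩) ?_
      · rw [Finset.card_erase_of_mem hzA, hc]; rfl
      · intro w hw hwy; exact hz w (Finset.mem_of_mem_erase hw) hwy

theorem stmt16 {V : Type} [DecidableEq V] (Eout : V → Finset V)
    (Γ : Set (Clause V))
    (hΓ : Γ = {C | ∃ x, C = (insert x (Eout x), ∅)} ∪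
              {C | ∃ x y, y ∈ Eout x ∧ C = (∅, insert x {y})})
    (x : V) (hx : Res Γ ({x}, ∅)) (hnx : Res Γ (∅, {x})) :
    ∀ y ∈ Eout x, Res Γ ({y}, ∅) ∧ Res Γ (∅, {y}) := by
  -- negative clauses for all out-neighbors
  have hneg : ∀ z ∈ Eout x, Res Γ (∅, {z}) := by
    intro z hz
    have hmem : ((∅, insert x {z}) : Clause V) ∈ Γ := by
      rw [hΓ]; exact Or.inr ⟨x, z, hz, rfl⟩
    have hx' : Res Γ (insert x (∅:Finset V), ∅) := by simpa using hx
    have := Res.cut x hx' (Res.mem hmem)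
    simpa using this
  -- positive clause (Eout x, ∅)
  have hpos : Res Γ (Eout x, ∅) := by
    have hmem : ((insert x (Eout x), ∅) : Clause V) ∈ Γ := by
      rw [hΓ]; exact Or.inl ⟨x, rfl⟩
    have hnx' : Res Γ ((∅:Finset V), insert x ∅) := by simpa using hnx
    have := Res.cut x (Res.mem hmem) hnx'
    simpa using this
  intro y hy
  refine ⟨?_, hneg y hy⟩
  exact elim_aux Γ y (Eout x).card (Eout x) rfl hpos hy (fun z hz _ => hneg z hz)
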